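/- For n, k ≥ 0, a gamble h on N^n, and m' ∈ N^{n+k}: writing f = h ∘ T^n and f̃ for its cylindrical extension to X^{n+k}, one has MuHy^{n+k}(f̃|m') = Σ_{m ∈ N^n} (ν(m'−m)·ν(m)/ν(m')) · h(m), where ν(m'−m) is taken to be 0 unless m ≤ m' componentwise. -/

import Mathlib

/-- The counting map: `countVec z x` is the number of indices `k` with `z k = x`. -/
def countVec {X : Type*} [DecidableEq X] {n : ℕ} (z : Fin n → X) : X → ℕ :=
  fun x => (Finset.univ.filter fun k => z k = x).card

/-- The multinomial coefficient `ν(m) = (Σ_x m_x)! / ∏_x m_x!`. -/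
def nu {X : Type*} [Fintype X] (m : X → ℕ) : ℕ :=
  (∑ x, m x).factorial / ∏ x, (m x).factorial

/-- The set of count vectors `N^n = {m ∈ ℕ^X : Σ_x m_x = n}`, as a finset. -/
def NN (X : Type*) [Fintype X] [DecidableEq X] (n : ℕ) : Finset (X → ℕ) :=
  (Fintype.piFinset fun _ : X => Finset.range (n + 1)).filter fun m => ∑ x, m x = n

/-- `MuHy^n(f|m)`: the uniform average of `f` over the invariant atom `[m]`, with
`ν(m) = |[m]|` elements. -/
noncomputable def MuHy {X : Type*} [Fintype X] [DecidableEq X] {n : ℕ}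
    (f : (Fin n → X) → ℝ) (m : X → ℕ) : ℝ :=
  (∑ z ∈ Finset.univ.filter fun z : Fin n → X => countVec z = m, f z) / nu m

set_option linter.unusedSectionVars false

section Aux

open Finset

variable {X : Type*} [Fintype X] [DecidableEq X]

lemma countVec_apply {n : ℕ} (z : Fin n → X) (x : X) :
    countVec z x = ∑ i, if z i = x then 1 else 0 := by
  rw [countVec, Finset.card_filter]

lemma sum_countVec {n : ℕ} (z : Fin n → X) : ∑ x, countVec z x = n := by
  have := Finset.card_eq_sum_card_fiberwise (s := (univ : Finset (Fin n)))
    (t := (univ : Finset X)) (f := z) (fun x _ => mem_univ _)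
  simpa [countVec] using this.symm

lemma countVec_cons {n : ℕ} (x : X) (w : Fin n → X) (y : X) :
    countVec (Fin.cons x w) y = (if x = y then 1 else 0) + countVec w y := by
  rw [countVec_apply, countVec_apply, Fin.sum_univ_succ]
  simp

lemma card_countVec : ∀ (n : ℕ) (m : X → ℕ), (∑ x, m x = n) →
    ((Finset.univ.filter fun z : Fin n → X => countVec z = m).card) * ∏ x, (m x).factorial
      = n.factorial
  | 0, m, hm => by
      have hm0 : ∀ x, m x = 0 := fun x =>
        Finset.sum_eq_zero_iff.mp hm x (mem_univ x)
      have h1 : ∀ z : Fin 0 → X, countVec z = m := by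
        intro z; funext y; rw [countVec_apply]; simp [hm0 y]
      simp [Finset.filter_true_of_mem (fun z _ => h1 z), hm0, Finset.card_univ]
  | (n+1), m, hm => by
      have key : ((Finset.univ.filter fun z : Fin (n+1) → X => countVec z = m).card)
          = ∑ x : X, if 1 ≤ m x then
              ((Finset.univ.filter fun w : Fin n → X =>
                countVec w = fun y => m y - if x = y then 1 else 0).card) else 0 := by
        rw [Finset.card_filter]
        rw [← (Fin.consEquiv (fun _ : Fin (n+1) => X)).sum_comp
          (fun z => if countVec z = m then 1 else 0)]
        rw [Fintype.sum_prod_type]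
        refine Finset.sum_congr rfl fun x _ => ?_
        have happ : ∀ w : Fin n → X,
            (Fin.consEquiv (fun _ : Fin (n+1) => X)) (x, w) = Fin.cons x w := fun _ => rfl
        have hiff : ∀ w : Fin n → X,
            (countVec (Fin.cons x w) = m) ↔
              (1 ≤ m x ∧ countVec w = fun y => m y - if x = y then 1 else 0) := by
          intro w
          constructor
          · intro hc
            have hc' : ∀ y, (if x = y then 1 else 0) + countVec w y = m y := by
              intro y; rw [← hc]; exact (countVec_cons x w y).symm
            have hx1 : 1 ≤ m x := by have := hc' x; simp at this; omega
            refine ⟨hx1, ?_⟩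
            funext y
            have h2 := hc' y
            by_cases hxy : x = y
            · simp only [hxy, if_pos rfl] at h2 ⊢; omega
            · simp only [hxy, if_neg hxy] at h2 ⊢; omega
          · rintro ⟨h1, h2⟩
            funext y
            rw [countVec_cons, h2]
            by_cases hxy : x = y
            · simp only [if_pos hxy]; subst hxy; omega
            · simp only [if_neg hxy]; omega
        by_cases hx : 1 ≤ m x
        · simp only [hx, if_true, Finset.card_filter]
          refine Finset.sum_congr rfl fun w _ => ?_
          rw [happ w]
          simp [hiff w, hx]
        · simp only [hx, if_false]
          refine Finset.sum_eq_zero fun w _ => ?_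
          rw [happ w]
          simp [hiff w, hx]
      rw [key, Finset.sum_mul]
      have hterm : ∀ x : X,
          (if 1 ≤ m x then
              ((Finset.univ.filter fun w : Fin n → X =>
                countVec w = fun y => m y - if x = y then 1 else 0).card) else 0)
            * ∏ y, (m y).factorial = m x * n.factorial := by
        intro x
        by_cases hx : 1 ≤ m x
        · simp only [hx, if_true]
          set m₁ : X → ℕ := fun y => m y - if x = y then 1 else 0 with hm₁
          have hsum : ∑ y, m₁ y = n := by
            have hd : ∀ y ∈ (univ : Finset X), (if x = y then 1 else 0) ≤ m y := by
              intro y _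
              by_cases hxy : x = y
              · subst hxy; simpa using hx
              · simp [hxy]
            have : ∑ y, m₁ y = (∑ y, m y) - ∑ y : X, (if x = y then 1 else 0) :=
              Finset.sum_tsub_distrib univ hd
            rw [this, hm, Finset.sum_ite_eq univ x (fun _ => 1)]
            simp
          have hprod : ∏ y, (m y).factorial = m x * ∏ y, (m₁ y).factorial := by
            rw [← Finset.mul_prod_erase univ (fun y => (m y).factorial) (mem_univ x),
                ← Finset.mul_prod_erase univ (fun y => (m₁ y).factorial) (mem_univ x)]
            have h1 : (m x).factorial = m x * (m₁ x).factorial := by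
              have hmx : m x = (m x - 1) + 1 := by omega
              have hm₁x : m₁ x = m x - 1 := by rw [hm₁]; simp
              rw [hm₁x]
              conv_lhs => rw [hmx]
              rw [Nat.factorial_succ]
              congr 1
              omega
            have h2 : ∀ y ∈ univ.erase x, (m₁ y).factorial = (m y).factorial := by
              intro y hy
              have hxy : x ≠ y := fun he => (Finset.mem_erase.mp hy).1 he.symm
              rw [hm₁]; simp [hxy]
            rw [Finset.prod_congr rfl h2, h1]
            ring
          rw [hprod, ← mul_assoc, mul_comm _ (m x), mul_assoc,
            card_countVec n m₁ hsum]
        · have hx0 : m x = 0 := by omega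
          simp [hx, hx0]
      rw [Finset.sum_congr rfl fun x _ => hterm x, ← Finset.sum_mul, hm,
        Nat.factorial_succ]

lemma nu_eq_card (n : ℕ) (m : X → ℕ) (hm : ∑ x, m x = n) :
    nu m = ((Finset.univ.filter fun z : Fin n → X => countVec z = m).card) := by
  have hpos : 0 < ∏ x, (m x).factorial :=
    Finset.prod_pos fun x _ => Nat.factorial_pos _
  have := card_countVec n m hm
  rw [nu, hm, ← this, Nat.mul_div_cancel _ hpos]

lemma countVec_append {n k : ℕ} (a : Fin n → X) (b : Fin k → X) :
    countVec (Fin.append a b) = countVec a + countVec b := by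
  funext x
  simp only [Pi.add_apply, countVec_apply, Fin.sum_univ_add, Fin.append_left, Fin.append_right]

lemma countVec_mem_NN {n : ℕ} (a : Fin n → X) : countVec a ∈ NN X n := by
  rw [NN, Finset.mem_filter]
  refine ⟨?_, sum_countVec a⟩
  rw [Fintype.mem_piFinset]
  intro x
  rw [Finset.mem_range, Nat.lt_succ_iff]
  have h1 : countVec a x ≤ ∑ y, countVec a y :=
    Finset.single_le_sum (fun y _ => Nat.zero_le _) (mem_univ x)
  rw [sum_countVec a] at h1
  exact h1


end Aux

open Finset in
/-- For a gamble `h` on `N^n` and a count vector `m' ∈ N^{n+k}`, writing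
`f = h ∘ T^n` and `f̃` for its cylindrical extension to `X^{n+k}`,
`MuHy^{n+k}(f̃|m') = Σ_{m ∈ N^n} (ν(m'−m)·ν(m)/ν(m'))·h(m)`, with `ν(m'−m) = 0` unless
`m ≤ m'` componentwise. -/
theorem muHy_cylindrical_extension
    {X : Type*} [Fintype X] [DecidableEq X] [Nonempty X] (n k : ℕ)
    (h : (X → ℕ) → ℝ) (m' : X → ℕ) (hm' : ∑ x, m' x = n + k) :
    MuHy (fun z : Fin (n + k) → X =>
        h (countVec fun i : Fin n => z (Fin.castAdd k i))) m'
      = ∑ m ∈ NN X n,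
          ((if ∀ x, m x ≤ m' x then (nu (m' - m) : ℝ) else 0) * nu m / nu m') * h m := by
  have hnum : (∑ z ∈ Finset.univ.filter fun z : Fin (n+k) → X => countVec z = m',
        h (countVec fun i : Fin n => z (Fin.castAdd k i)))
      = ∑ m ∈ NN X n,
          (if ∀ x, m x ≤ m' x then (nu (m' - m) : ℝ) else 0) * nu m * h m := by
    rw [Finset.sum_filter]
    rw [← (Fin.appendEquiv n k).sum_comp (fun z : Fin (n+k) → X =>
      if countVec z = m' then h (countVec fun i : Fin n => z (Fin.castAdd k i)) else 0)]
    rw [Fintype.sum_prod_type]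
    have happ : ∀ (a : Fin n → X) (b : Fin k → X),
        (Fin.appendEquiv n k) (a, b) = Fin.append a b := fun _ _ => rfl
    have hstep1 : ∀ a : Fin n → X,
        (∑ b : Fin k → X, if countVec ((Fin.appendEquiv n k) (a, b)) = m'
            then h (countVec fun i : Fin n =>
              ((Fin.appendEquiv n k) (a, b)) (Fin.castAdd k i)) else 0)
          = (if ∀ x, countVec a x ≤ m' x then (nu (m' - countVec a) : ℝ) else 0)
              * h (countVec a) := by
      intro a
      have hfront : ∀ b : Fin k → X,
          (fun i : Fin n => (Fin.append a b) (Fin.castAdd k i)) = a := by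
        intro b; funext i; exact Fin.append_left a b i
      simp only [happ, hfront]
      have hcond : ∀ b : Fin k → X,
          (countVec (Fin.append a b) = m') ↔
            ((∀ x, countVec a x ≤ m' x) ∧ countVec b = m' - countVec a) := by
        intro b
        rw [countVec_append]
        constructor
        · intro hc
          have hc' : ∀ x, countVec a x + countVec b x = m' x := fun x =>
            congrFun hc x
          constructor
          · intro x; have := hc' x; omega
          · funext x; have := hc' x; simp only [Pi.sub_apply]; omega
        · rintro ⟨h1, h2⟩
          funext x
          have h2' := congrFun h2 x
          simp only [Pi.sub_apply] at h2'
          simp only [Pi.add_apply, h2']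
          have := h1 x; omega
      by_cases hle : ∀ x, countVec a x ≤ m' x
      · rw [if_pos hle]
        calc (∑ b : Fin k → X, if countVec (Fin.append a b) = m'
                then h (countVec a) else 0)
            = ∑ b : Fin k → X, if countVec b = m' - countVec a
                then h (countVec a) else 0 := by
              refine Finset.sum_congr rfl fun b _ => ?_
              rw [if_congr (hcond b) rfl rfl, if_congr (and_iff_right hle) rfl rfl]
          _ = ∑ b ∈ Finset.univ.filter
                (fun b : Fin k → X => countVec b = m' - countVec a), h (countVec a) := by
              rw [Finset.sum_filter]
          _ = ((Finset.univ.filter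
                (fun b : Fin k → X => countVec b = m' - countVec a)).card : ℝ)
                * h (countVec a) := by
              rw [Finset.sum_const, nsmul_eq_mul]
          _ = (nu (m' - countVec a) : ℝ) * h (countVec a) := by
              have hsub : ∑ x, (m' - countVec a) x = k := by
                have hd : ∀ x ∈ (univ : Finset X), countVec a x ≤ m' x :=
                  fun x _ => hle x
                have : ∑ x, (m' - countVec a) x
                    = (∑ x, m' x) - ∑ x, countVec a x := by
                  simp only [Pi.sub_apply]
                  exact Finset.sum_tsub_distrib univ hd
                rw [this, hm', sum_countVec]
                omega
              rw [nu_eq_card k _ hsub]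
      · rw [if_neg hle, zero_mul]
        refine Finset.sum_eq_zero fun b _ => ?_
        rw [if_congr (hcond b) rfl rfl, if_neg (fun hc => hle hc.1)]
    rw [Finset.sum_congr rfl fun a _ => hstep1 a]
    rw [← Finset.sum_fiberwise_of_maps_to (fun a (_ : a ∈ (univ : Finset (Fin n → X))) =>
      countVec_mem_NN a) (fun a =>
        (if ∀ x, countVec a x ≤ m' x then (nu (m' - countVec a) : ℝ) else 0)
          * h (countVec a))]
    refine Finset.sum_congr rfl fun m hm => ?_
    have hmn : ∑ x, m x = n := (Finset.mem_filter.mp hm).2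
    calc (∑ a ∈ Finset.univ.filter fun a : Fin n → X => countVec a = m,
            (if ∀ x, countVec a x ≤ m' x then (nu (m' - countVec a) : ℝ) else 0)
              * h (countVec a))
        = ∑ a ∈ Finset.univ.filter fun a : Fin n → X => countVec a = m,
            (if ∀ x, m x ≤ m' x then (nu (m' - m) : ℝ) else 0) * h m := by
          refine Finset.sum_congr rfl fun a ha => ?_
          rw [(Finset.mem_filter.mp ha).2]
      _ = ((Finset.univ.filter fun a : Fin n → X => countVec a = m).card : ℝ)
            * ((if ∀ x, m x ≤ m' x then (nu (m' - m) : ℝ) else 0) * h m) := by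
          rw [Finset.sum_const, nsmul_eq_mul]
      _ = (if ∀ x, m x ≤ m' x then (nu (m' - m) : ℝ) else 0) * nu m * h m := by
          rw [nu_eq_card n m hmn]
          ring
  rw [MuHy, hnum, Finset.sum_div]
  refine Finset.sum_congr rfl fun m _ => ?_
  ring
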